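/- For all integers $j \geq 7$, $\mathbf{g}_1(j,2) = -\frac{j}{2} + \sum_{k=1}^{j-1}\left(\frac{1}{2\sin(k\pi/j)} - \frac{1}{4}\sin\frac{k\pi}{j}\right) > 0$, while $\mathbf{g}_1(6,2) < 0$. -/

import Mathlib

open Real Finset

lemma aux_sin_ge {x : ℝ} (hx : 0 ≤ x) : x - x^3/6 ≤ Real.sin x := by
  have key : Monotone (fun t : ℝ => Real.sin t - (t - t^3/6)) := by
    apply monotone_of_deriv_nonneg
    · fun_prop
    · intro t
      have hd : HasDerivAt (fun t : ℝ => Real.sin t - (t - t^3/6))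
          (Real.cos t - (1 - (3:ℕ) * t^(3-1)/6)) t :=
        (Real.hasDerivAt_sin t).sub ((hasDerivAt_id' t).sub ((hasDerivAt_pow 3 t).div_const 6))
      rw [hd.deriv]
      have hc := Real.one_sub_sq_div_two_le_cos (x := t)
      norm_num
      nlinarith [hc]
  have h0 := key hx
  simpa using h0

lemma aux_cos_le {x : ℝ} (hx : 0 ≤ x) : Real.cos x ≤ 1 - x^2/2 + x^4/24 := by
  have key : MonotoneOn (fun t : ℝ => (1 - t^2/2 + t^4/24) - Real.cos t) (Set.Ici 0) := by
    apply monotoneOn_of_deriv_nonneg (convex_Ici 0)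
    · fun_prop
    · fun_prop
    · intro t ht
      rw [interior_Ici] at ht
      have ht0 : (0:ℝ) ≤ t := le_of_lt ht
      have hd : HasDerivAt (fun t : ℝ => (1 - t^2/2 + t^4/24) - Real.cos t)
          ((0 - (2:ℕ) * t^(2-1)/2 + (4:ℕ) * t^(4-1)/24) - (-Real.sin t)) t := by
        exact ((((hasDerivAt_const t (1:ℝ)).sub ((hasDerivAt_pow 2 t).div_const 2)).add
          ((hasDerivAt_pow 4 t).div_const 24)).sub (Real.hasDerivAt_cos t))
      rw [hd.deriv]
      have hs := aux_sin_ge ht0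
      norm_num
      nlinarith [hs]
  have h0 := key Set.self_mem_Ici hx hx
  simpa using h0

lemma aux_sin_le {x : ℝ} (hx : 0 ≤ x) : Real.sin x ≤ x - x^3/6 + x^5/120 := by
  have key : MonotoneOn (fun t : ℝ => (t - t^3/6 + t^5/120) - Real.sin t) (Set.Ici 0) := by
    apply monotoneOn_of_deriv_nonneg (convex_Ici 0)
    · fun_prop
    · fun_prop
    · intro t ht
      rw [interior_Ici] at ht
      have ht0 : (0:ℝ) ≤ t := le_of_lt ht
      have hd : HasDerivAt (fun t : ℝ => (t - t^3/6 + t^5/120) - Real.sin t)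
          ((1 - (3:ℕ) * t^(3-1)/6 + (5:ℕ) * t^(5-1)/120) - Real.cos t) t := by
        exact (((hasDerivAt_id' t).sub ((hasDerivAt_pow 3 t).div_const 6)).add
          ((hasDerivAt_pow 5 t).div_const 120)).sub (Real.hasDerivAt_sin t)
      rw [hd.deriv]
      have hc := aux_cos_le ht0
      norm_num
      nlinarith [hc]
  have h0 := key Set.self_mem_Ici hx hx
  simpa using h0

lemma sin_le_quintic {x q : ℝ} (hx : 0 ≤ x) (hxq : x ≤ q) (hq : q ≤ π/2) :
    Real.sin x ≤ q - q^3/6 + q^5/120 := by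
  have h1 : Real.sin x ≤ Real.sin q := by
    have hpi := Real.pi_pos
    exact Real.strictMonoOn_sin.monotoneOn ⟨by linarith, by linarith⟩
      ⟨by linarith, hq⟩ hxq
  exact h1.trans (aux_sin_le (hx.trans hxq))

lemma f_mono {s u : ℝ} (hs : 0 < s) (hsu : s ≤ u) :
    1/(2*u) - (1/4)*u ≤ 1/(2*s) - (1/4)*s := by
  have hu : 0 < u := lt_of_lt_of_le hs hsu
  have h1 : 1/(2*u) ≤ 1/(2*s) := by gcongr
  linarith

lemma f_quarter {s : ℝ} (hs : 0 < s) (hs1 : s ≤ 1) : 1/4 ≤ 1/(2*s) - (1/4)*s := by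
  have h2 : 1/(2*s) - (1/4)*s - 1/4 = (2 - s - s^2)/(4*s) := by field_simp; ring
  have h3 : (0:ℝ) ≤ (2 - s - s^2)/(4*s) := div_nonneg (by nlinarith) (by linarith)
  linarith [h2 ▸ h3]

lemma g1_pos_seven : (0 : ℝ) < -((7:ℕ) : ℝ) / 2 + ∑ k ∈ Finset.Icc 1 (7 - 1),
    (1 / (2 * Real.sin ((k:ℕ) * π / ((7:ℕ):ℝ))) - (1 / 4) * Real.sin ((k:ℕ) * π / ((7:ℕ):ℝ))) := by
  have expand : ∀ g : ℕ → ℝ, ∑ k ∈ Finset.Icc 1 (7-1), g k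
      = g 1 + g 2 + g 3 + g 4 + g 5 + g 6 := by
    intro g
    show ∑ k ∈ Finset.Icc 1 6, g k = _
    rw [show Finset.Icc (1:ℕ) 6 = {1,2,3,4,5,6} from rfl]
    simp [Finset.sum_insert, Finset.mem_insert]
    ring
  rw [expand]
  push_cast
  rw [show (4:ℝ) * π / 7 = π - 3 * π / 7 by ring, Real.sin_pi_sub,
      show (5:ℝ) * π / 7 = π - 2 * π / 7 by ring, Real.sin_pi_sub,
      show (6:ℝ) * π / 7 = π - 1 * π / 7 by ring, Real.sin_pi_sub]
  have hpi := Real.pi_pos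
  have hlt := Real.pi_lt_d4   -- π < 3.1416
  have hgt := Real.pi_gt_d2   -- 3.14 < π
  have hs : ∀ k : ℝ, 0 < k → k ≤ 3 → 0 < Real.sin (k * π / 7) := by
    intro k hk0 hk3
    apply Real.sin_pos_of_pos_of_lt_pi
    · positivity
    · rw [div_lt_iff₀ (by norm_num)]; nlinarith
  have hq : ∀ k : ℝ, 0 < k → k ≤ 3 →
      Real.sin (k * π / 7) ≤ k * 3.1416 / 7 - (k * 3.1416 / 7)^3/6 + (k * 3.1416 / 7)^5/120 := by
    intro k hk0 hk3
    apply sin_le_quintic (by positivity)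
    · have : k * π ≤ k * 3.1416 := by nlinarith
      linarith
    · nlinarith
  have b1 := f_mono (hs 1 one_pos (by norm_num)) (hq 1 one_pos (by norm_num))
  have b2 := f_mono (hs 2 (by norm_num) (by norm_num)) (hq 2 (by norm_num) (by norm_num))
  have b3 := f_mono (hs 3 (by norm_num) (by norm_num)) (hq 3 (by norm_num) (by norm_num))
  norm_num at b1 b2 b3 ⊢
  linarith

lemma g1_pos_eight : (0 : ℝ) < -((8:ℕ) : ℝ) / 2 + ∑ k ∈ Finset.Icc 1 (8 - 1),
    (1 / (2 * Real.sin ((k:ℕ) * π / ((8:ℕ):ℝ))) - (1 / 4) * Real.sin ((k:ℕ) * π / ((8:ℕ):ℝ))) := by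
  have expand : ∀ g : ℕ → ℝ, ∑ k ∈ Finset.Icc 1 (8-1), g k
      = g 1 + g 2 + g 3 + g 4 + g 5 + g 6 + g 7 := by
    intro g
    show ∑ k ∈ Finset.Icc 1 7, g k = _
    rw [show Finset.Icc (1:ℕ) 7 = {1,2,3,4,5,6,7} from rfl]
    simp [Finset.sum_insert, Finset.mem_insert]
    ring
  rw [expand]
  push_cast
  rw [show (5:ℝ) * π / 8 = π - 3 * π / 8 by ring, Real.sin_pi_sub,
      show (6:ℝ) * π / 8 = π - 2 * π / 8 by ring, Real.sin_pi_sub,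
      show (7:ℝ) * π / 8 = π - 1 * π / 8 by ring, Real.sin_pi_sub,
      show (4:ℝ) * π / 8 = π / 2 by ring, Real.sin_pi_div_two]
  have hpi := Real.pi_pos
  have hlt := Real.pi_lt_d4   -- π < 3.1416
  have hgt := Real.pi_gt_d2   -- 3.14 < π
  have hs : ∀ k : ℝ, 0 < k → k ≤ 3 → 0 < Real.sin (k * π / 8) := by
    intro k hk0 hk3
    apply Real.sin_pos_of_pos_of_lt_pi
    · positivity
    · rw [div_lt_iff₀ (by norm_num)]; nlinarith
  have hq : ∀ k : ℝ, 0 < k → k ≤ 3 →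
      Real.sin (k * π / 8) ≤ k * 3.1416 / 8 - (k * 3.1416 / 8)^3/6 + (k * 3.1416 / 8)^5/120 := by
    intro k hk0 hk3
    apply sin_le_quintic (by positivity)
    · have : k * π ≤ k * 3.1416 := by nlinarith
      linarith
    · nlinarith
  have b1 := f_mono (hs 1 one_pos (by norm_num)) (hq 1 one_pos (by norm_num))
  have b2 := f_mono (hs 2 (by norm_num) (by norm_num)) (hq 2 (by norm_num) (by norm_num))
  have b3 := f_mono (hs 3 (by norm_num) (by norm_num)) (hq 3 (by norm_num) (by norm_num))
  norm_num at b1 b2 b3 ⊢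
  linarith

set_option maxHeartbeats 1000000 in
lemma g1_pos_ge_nine (j : ℕ) (h9 : 9 ≤ j) :
    (0 : ℝ) < -(j : ℝ) / 2 + ∑ k ∈ Finset.Icc 1 (j - 1),
    (1 / (2 * Real.sin ((k:ℕ) * π / (j:ℕ))) - (1 / 4) * Real.sin ((k:ℕ) * π / (j:ℕ))) := by
  have hpi := Real.pi_pos
  have hjR : (9:ℝ) ≤ (j:ℝ) := by exact_mod_cast h9
  have hj0 : (0:ℝ) < (j:ℝ) := by linarith
  set F : ℕ → ℝ := fun k => 1 / (2 * Real.sin ((k:ℝ) * π / (j:ℝ))) -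
      (1 / 4) * Real.sin ((k:ℝ) * π / (j:ℝ)) with hF
  have hsin : ∀ k : ℕ, 1 ≤ k → k ≤ j - 1 → 0 < Real.sin ((k:ℝ) * π / (j:ℝ)) := by
    intro k h1 h2
    have hk1 : (1:ℝ) ≤ (k:ℝ) := by exact_mod_cast h1
    have hk2 : (k:ℝ) ≤ (j:ℝ) - 1 := by
      have h : k + 1 ≤ j := by omega
      have := (Nat.cast_le (α := ℝ)).mpr h
      push_cast at this; linarith
    apply Real.sin_pos_of_pos_of_lt_pi
    · positivity
    · rw [div_lt_iff₀ hj0]; nlinarith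
  have hquarter : ∀ k ∈ Finset.Icc 1 (j-1), (1/4 : ℝ) ≤ F k := by
    intro k hk
    rw [Finset.mem_Icc] at hk
    exact f_quarter (hsin k hk.1 hk.2) (Real.sin_le_one _)
  set s6 : Finset ℕ := {1, 2, 3, j-3, j-2, j-1} with hs6
  have hsub : s6 ⊆ Finset.Icc 1 (j-1) := by
    intro k hk
    simp only [hs6, Finset.mem_insert, Finset.mem_singleton] at hk
    rw [Finset.mem_Icc]
    omega
  have hcard : s6.card = 6 := by
    rw [hs6]
    rw [Finset.card_insert_of_notMem (by simp; omega),
        Finset.card_insert_of_notMem (by simp; omega),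
        Finset.card_insert_of_notMem (by simp; omega),
        Finset.card_insert_of_notMem (by simp; omega),
        Finset.card_insert_of_notMem (by simp; omega),
        Finset.card_singleton]
  have hsplit : ∑ k ∈ Finset.Icc 1 (j-1), F k
      = ∑ k ∈ Finset.Icc 1 (j-1) \ s6, F k + ∑ k ∈ s6, F k :=
    (Finset.sum_sdiff hsub).symm
  have hcardd : (Finset.Icc 1 (j-1) \ s6).card = j - 7 := by
    rw [Finset.card_sdiff_of_subset hsub, Nat.card_Icc, hcard]
    omega
  have hrest : ((j:ℝ) - 7) / 4 ≤ ∑ k ∈ Finset.Icc 1 (j-1) \ s6, F k := by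
    have h := Finset.card_nsmul_le_sum (Finset.Icc 1 (j-1) \ s6) F (1/4 : ℝ)
      (fun k hk => hquarter k (Finset.sdiff_subset hk))
    rw [hcardd, nsmul_eq_mul] at h
    have hc : ((j - 7 : ℕ) : ℝ) = (j:ℝ) - 7 := by
      have h7 : (7:ℕ) ≤ j := by omega
      push_cast [h7]; ring
    rw [hc] at h
    linarith
  have hsum6 : ∑ k ∈ s6, F k = F 1 + F 2 + F 3 + F (j-3) + F (j-2) + F (j-1) := by
    rw [hs6]
    rw [Finset.sum_insert (by simp; omega), Finset.sum_insert (by simp; omega),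
        Finset.sum_insert (by simp; omega), Finset.sum_insert (by simp; omega),
        Finset.sum_insert (by simp; omega), Finset.sum_singleton]
    ring
  have hpair : ∀ k : ℕ, 1 ≤ k → k ≤ 3 → F (j - k) = F k := by
    intro k h1 h3
    have hkj : k ≤ j := by omega
    have hcast : ((j - k : ℕ) : ℝ) = (j:ℝ) - (k:ℝ) := by push_cast [hkj]; ring
    have harg : ((j:ℝ) - (k:ℝ)) * π / (j:ℝ) = π - (k:ℝ) * π / (j:ℝ) := by
      field_simp
    simp only [hF]
    rw [hcast, harg, Real.sin_pi_sub]
  have hsmall : ∀ k : ℕ, 1 ≤ k → k ≤ 3 →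
      (j:ℝ) / (2 * (k:ℝ) * π) - (k:ℝ) * π / (4 * (j:ℝ)) ≤ F k := by
    intro k h1 h3
    have hkj : k ≤ j - 1 := by omega
    have hk1 : (0:ℝ) < (k:ℝ) := by exact_mod_cast Nat.pos_of_ne_zero (by omega)
    have hsp := hsin k h1 hkj
    have hx0 : (0:ℝ) < (k:ℝ) * π / (j:ℝ) := by positivity
    have hsx : Real.sin ((k:ℝ) * π / (j:ℝ)) ≤ (k:ℝ) * π / (j:ℝ) := Real.sin_le hx0.le
    have hmain := f_mono hsp hsx
    have heq : 1 / (2 * ((k:ℝ) * π / (j:ℝ))) = (j:ℝ) / (2 * (k:ℝ) * π) := by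
      rw [show 2 * ((k:ℝ) * π / (j:ℝ)) = (2 * (k:ℝ) * π) / (j:ℝ) by ring, one_div_div]
    have heq2 : (1/4 : ℝ) * ((k:ℝ) * π / (j:ℝ)) = (k:ℝ) * π / (4 * (j:ℝ)) := by ring
    simp only [hF]
    linarith [hmain, heq, heq2]
  have hb1 := hsmall 1 le_rfl (by norm_num)
  have hb2 := hsmall 2 (by norm_num) (by norm_num)
  have hb3 := hsmall 3 (by norm_num) (by norm_num)
  push_cast at hb1 hb2 hb3
  have hp1 := hpair 1 le_rfl (by norm_num)
  have hp2 := hpair 2 (by norm_num) (by norm_num)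
  have hp3 := hpair 3 (by norm_num) (by norm_num)
  have hlt := Real.pi_lt_d4   -- π < 3.1416
  have c1 : 0.159154 * (j:ℝ) ≤ (j:ℝ)/(2*(1:ℝ)*π) := by
    rw [le_div_iff₀ (by positivity)]
    have h : (0.159154:ℝ) * (2*(1:ℝ)*π) ≤ 1 := by linarith
    nlinarith [mul_le_mul_of_nonneg_left h hj0.le]
  have c2 : 0.079577 * (j:ℝ) ≤ (j:ℝ)/(2*(2:ℝ)*π) := by
    rw [le_div_iff₀ (by positivity)]
    have h : (0.079577:ℝ) * (2*(2:ℝ)*π) ≤ 1 := by linarith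
    nlinarith [mul_le_mul_of_nonneg_left h hj0.le]
  have c3 : 0.053051 * (j:ℝ) ≤ (j:ℝ)/(2*(3:ℝ)*π) := by
    rw [le_div_iff₀ (by positivity)]
    have h : (0.053051:ℝ) * (2*(3:ℝ)*π) ≤ 1 := by linarith
    nlinarith [mul_le_mul_of_nonneg_left h hj0.le]
  have c4 : (1:ℝ)*π/(4*(j:ℝ)) ≤ 0.08727 := by
    rw [div_le_iff₀ (by positivity)]; linarith
  have c5 : (2:ℝ)*π/(4*(j:ℝ)) ≤ 0.17454 := by
    rw [div_le_iff₀ (by positivity)]; linarith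
  have c6 : (3:ℝ)*π/(4*(j:ℝ)) ≤ 0.26181 := by
    rw [div_le_iff₀ (by positivity)]; linarith
  have hfin : ((j:ℝ) - 7)/4 + 2 * ((j:ℝ)/(2*(1:ℝ)*π) - (1:ℝ)*π/(4*(j:ℝ)))
      + 2 * ((j:ℝ)/(2*(2:ℝ)*π) - (2:ℝ)*π/(4*(j:ℝ)))
      + 2 * ((j:ℝ)/(2*(3:ℝ)*π) - (3:ℝ)*π/(4*(j:ℝ))) > (j:ℝ)/2 := by
    linarith [c1, c2, c3, c4, c5, c6, hjR]
  have hsum_ge : ((j:ℝ) - 7)/4 + 2 * ((j:ℝ)/(2*(1:ℝ)*π) - (1:ℝ)*π/(4*(j:ℝ)))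
      + 2 * ((j:ℝ)/(2*(2:ℝ)*π) - (2:ℝ)*π/(4*(j:ℝ)))
      + 2 * ((j:ℝ)/(2*(3:ℝ)*π) - (3:ℝ)*π/(4*(j:ℝ)))
      ≤ ∑ k ∈ Finset.Icc 1 (j-1), F k := by
    rw [hsplit, hsum6, hp1, hp2, hp3]
    linarith [hrest, hb1, hb2, hb3]
  linarith [hfin, hsum_ge]

theorem g1_two_pos (j : ℕ) (hj : 7 ≤ j) :
    (0 < -(j : ℝ) / 2 + ∑ k ∈ Finset.Icc 1 (j - 1),
        (1 / (2 * Real.sin (k * π / j)) - (1 / 4) * Real.sin (k * π / j))) ∧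
    (-(6 : ℝ) / 2 + ∑ k ∈ Finset.Icc (1 : ℕ) (6 - 1),
        (1 / (2 * Real.sin (k * π / 6)) - (1 / 4) * Real.sin (k * π / 6)) < 0) := by
  constructor
  · rcases (by omega : j = 7 ∨ j = 8 ∨ 9 ≤ j) with h | h | h
    · subst h; exact g1_pos_seven
    · subst h; exact g1_pos_eight
    · exact g1_pos_ge_nine j h
  · have expand : ∀ g : ℕ → ℝ, ∑ k ∈ Finset.Icc 1 (6-1), g k
        = g 1 + g 2 + g 3 + g 4 + g 5 := by
      intro g
      show ∑ k ∈ Finset.Icc 1 5, g k = _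
      rw [show Finset.Icc (1:ℕ) 5 = {1,2,3,4,5} from rfl]
      simp [Finset.sum_insert, Finset.mem_insert]
      ring
    rw [expand]
    push_cast
    rw [show (1:ℝ) * π / 6 = π / 6 by ring,
        show (2:ℝ) * π / 6 = π / 3 by ring,
        show (3:ℝ) * π / 6 = π / 2 by ring,
        show (4:ℝ) * π / 6 = π - π / 3 by ring,
        show (5:ℝ) * π / 6 = π - π / 6 by ring,
        Real.sin_pi_sub, Real.sin_pi_sub, Real.sin_pi_div_two,
        Real.sin_pi_div_six, Real.sin_pi_div_three]
    have h3 : Real.sqrt 3 ^ 2 = 3 := Real.sq_sqrt (by norm_num)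
    have h3p : 0 < Real.sqrt 3 := Real.sqrt_pos.mpr (by norm_num)
    have hinv : 1 / (2 * (Real.sqrt 3 / 2)) = Real.sqrt 3 / 3 := by
      rw [show 2 * (Real.sqrt 3 / 2) = Real.sqrt 3 by ring]
      rw [one_div, eq_div_iff (by norm_num), inv_mul_eq_div, div_eq_iff (ne_of_gt h3p)]
      nlinarith
    rw [hinv]
    nlinarith
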